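/- For all integers k, l, m ≥ 1 with l ≥ 2, the strict inequality L(l) + L(k+l+m) < L(l+m) + L(k+l) holds, where L(x) = (x(x-1)/2)(ln x - ln(x-1)). -/

import Mathlib

open Real Set

noncomputable def Lfun (x : ℝ) : ℝ := x * (x - 1) / 2 * (Real.log x - Real.log (x - 1))

noncomputable def Fder (x : ℝ) : ℝ := (2*x - 1)/2 * (Real.log x - Real.log (x - 1)) - 1/2

noncomputable def Gder (x : ℝ) : ℝ := Real.log x - Real.log (x - 1) - (2*x - 1)/(2*x*(x-1))

lemma hasDerivAt_Lfun {x : ℝ} (hx : 1 < x) : HasDerivAt Lfun (Fder x) x := by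
  have hx0 : x ≠ 0 := by linarith
  have hx1 : x - 1 ≠ 0 := by intro h; nlinarith [h]
  have h1 : HasDerivAt (fun x : ℝ => x * (x - 1) / 2) ((1 * (x - 1) + x * 1)/2) x :=
    ((hasDerivAt_id x).mul ((hasDerivAt_id x).sub_const 1)).div_const 2
  have h2 : HasDerivAt (fun x : ℝ => Real.log x - Real.log (x - 1)) (1/x - 1/(x-1)) x := by
    have ha : HasDerivAt Real.log (1/x) x := by simpa [one_div] using Real.hasDerivAt_log hx0
    have hb : HasDerivAt (fun x : ℝ => Real.log (x - 1)) (1/(x-1)) x := by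
      simpa using (((hasDerivAt_id x).sub_const 1).log hx1)
    exact ha.sub hb
  have := h1.mul h2
  refine this.congr_deriv ?_
  unfold Fder
  field_simp
  ring

lemma hasDerivAt_Fder {x : ℝ} (hx : 1 < x) : HasDerivAt Fder (Gder x) x := by
  have hx0 : x ≠ 0 := by linarith
  have hx1 : x - 1 ≠ 0 := by intro h; nlinarith [h]
  have h1 : HasDerivAt (fun x : ℝ => (2*x - 1)/2) (2*1/2) x :=
    (((hasDerivAt_id x).const_mul 2).sub_const 1).div_const 2
  have h2 : HasDerivAt (fun x : ℝ => Real.log x - Real.log (x - 1)) (1/x - 1/(x-1)) x := by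
    have ha : HasDerivAt Real.log (1/x) x := by simpa [one_div] using Real.hasDerivAt_log hx0
    have hb : HasDerivAt (fun x : ℝ => Real.log (x - 1)) (1/(x-1)) x := by
      simpa using (((hasDerivAt_id x).sub_const 1).log hx1)
    exact ha.sub hb
  have := (h1.mul h2).sub_const (1/2)
  refine this.congr_deriv ?_
  unfold Gder
  field_simp
  ring

/-- key auxiliary function for the log inequality -/
noncomputable def phi (t : ℝ) : ℝ := 2*t - (1 - t^2) * (Real.log (1+t) - Real.log (1-t))

lemma phi_pos {t : ℝ} (h0 : 0 < t) (h1 : t < 1) : 0 < phi t := by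
  have hmono : StrictMonoOn phi (Set.Ico (0:ℝ) 1) := by
    apply strictMonoOn_of_deriv_pos (convex_Ico 0 1)
    · apply ContinuousOn.sub (by fun_prop)
      apply ContinuousOn.mul (by fun_prop)
      apply ContinuousOn.sub
      · apply ContinuousOn.log (by fun_prop)
        intro y hy; simp only [mem_Ico] at hy; nlinarith [hy.1]
      · apply ContinuousOn.log (by fun_prop)
        intro y hy; simp only [mem_Ico] at hy; nlinarith [hy.2]
    · intro y hy
      rw [interior_Ico] at hy
      obtain ⟨hy0, hy1⟩ := hy
      have ha : (1:ℝ) + y ≠ 0 := by linarith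
      have hb : (1:ℝ) - y ≠ 0 := by linarith
      have hd : HasDerivAt phi (2*y*(Real.log (1+y) - Real.log (1-y))) y := by
        have h1 : HasDerivAt (fun t : ℝ => 1 - t^2) (-(2*y)) y := by
          simpa using ((hasDerivAt_pow 2 y).const_sub 1)
        have h2 : HasDerivAt (fun t : ℝ => Real.log (1+t) - Real.log (1-t))
            (1/(1+y) + 1/(1-y)) y := by
          have ha' : HasDerivAt (fun t : ℝ => Real.log (1+t)) (1/(1+y)) y := by
            simpa using ((hasDerivAt_id y).const_add 1).log ha
          have hb' : HasDerivAt (fun t : ℝ => Real.log (1-t)) (-(1/(1-y))) y := by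
            have : HasDerivAt (fun t : ℝ => 1 - t) (-1) y := by
              simpa using ((hasDerivAt_id y).const_sub 1)
            have := this.log hb
            convert this using 1; field_simp
          refine (ha'.sub hb').congr_deriv ?_; ring
        have h3 : HasDerivAt (fun t : ℝ => 2*t) 2 y := by
          simpa using (hasDerivAt_id y).const_mul 2
        have := h3.sub (h1.mul h2)
        refine this.congr_deriv ?_
        field_simp
        ring
      rw [hd.deriv]
      have hlog : Real.log (1-y) < Real.log (1+y) := by
        apply Real.log_lt_log (by linarith) (by linarith)
      have : 0 < Real.log (1+y) - Real.log (1-y) := by linarith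
      positivity
  have h := hmono (by constructor <;> norm_num) (by constructor <;> linarith) h0
  simpa [phi] using h

lemma key_log_ineq {x : ℝ} (hx : 1 < x) :
    Real.log x - Real.log (x - 1) < (2*x - 1)/(2*x*(x-1)) := by
  set t : ℝ := 1/(2*x - 1) with ht
  have h2x : (0:ℝ) < 2*x - 1 := by linarith
  have ht0 : 0 < t := by positivity
  have ht1 : t < 1 := by
    rw [ht, div_lt_one h2x]; linarith
  have hphi := phi_pos ht0 ht1
  have hne2 : (2*x - 1) ≠ 0 := ne_of_gt h2x
  have h1t : (1:ℝ) + t = 2*x / (2*x-1) := by rw [ht]; field_simp [hne2]; ring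
  have h2t : (1:ℝ) - t = (2*(x-1)) / (2*x-1) := by rw [ht]; field_simp [hne2]; ring
  have hx0 : (0:ℝ) < x := by linarith
  have hx1 : (0:ℝ) < x - 1 := by linarith
  have hlog : Real.log (1+t) - Real.log (1-t) = Real.log x - Real.log (x-1) := by
    rw [h1t, h2t, Real.log_div (by positivity) (by positivity),
      Real.log_div (by positivity) (by positivity),
      Real.log_mul (by norm_num) (ne_of_gt hx0),
      Real.log_mul (by norm_num) (ne_of_gt hx1)]
    ring
  have htsq : 1 - t^2 = 4*x*(x-1)/(2*x-1)^2 := by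
    rw [ht]; field_simp [hne2]; ring
  rw [phi, hlog, htsq, ht, mul_one_div] at hphi
  have hphi' : 4*x*(x-1)/(2*x-1)^2 * (Real.log x - Real.log (x-1)) < 2/(2*x-1) := by
    linarith
  rw [div_mul_eq_mul_div, div_lt_div_iff₀ (by positivity) h2x] at hphi'
  have hden : (0:ℝ) < 2*x*(x-1) := by positivity
  rw [lt_div_iff₀ hden]
  nlinarith [hphi', h2x, mul_pos h2x h2x]

lemma strictConcave_Lfun : StrictConcaveOn ℝ (Set.Ioi (1:ℝ)) Lfun := by
  apply strictConcaveOn_of_deriv2_neg (convex_Ioi 1)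
  · intro x hx
    exact (hasDerivAt_Lfun hx).continuousAt.continuousWithinAt
  · intro x hx
    rw [interior_Ioi] at hx
    have hev : deriv Lfun =ᶠ[nhds x] Fder :=
      Filter.eventually_of_mem (isOpen_Ioi.mem_nhds hx) (fun y hy => (hasDerivAt_Lfun hy).deriv)
    have : deriv^[2] Lfun x = Gder x := by
      simp only [Function.iterate_succ, Function.iterate_zero, Function.comp_apply, id]
      rw [hev.deriv_eq, (hasDerivAt_Fder hx).deriv]
    rw [this]
    have := key_log_ineq hx
    unfold Gder
    linarith

/-- For integers `k, l, m ≥ 1` with `l ≥ 2`, the strict inequality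
`L(l) + L(k+l+m) < L(l+m) + L(k+l)` holds, where `L(x) = (x(x-1)/2)(ln x - ln(x-1))`. -/
theorem L_chord_inequality_integers (k l m : ℕ) (hk : 1 ≤ k) (hl : 2 ≤ l) (hm : 1 ≤ m) :
    (fun x : ℝ => x * (x - 1) / 2 * (Real.log x - Real.log (x - 1))) (l : ℝ)
        + (fun x : ℝ => x * (x - 1) / 2 * (Real.log x - Real.log (x - 1))) ((k : ℝ) + l + m)
      < (fun x : ℝ => x * (x - 1) / 2 * (Real.log x - Real.log (x - 1))) ((l : ℝ) + m)
        + (fun x : ℝ => x * (x - 1) / 2 * (Real.log x - Real.log (x - 1))) ((k : ℝ) + l) := by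
  have hk' : (1:ℝ) ≤ (k:ℝ) := by exact_mod_cast hk
  have hl' : (2:ℝ) ≤ (l:ℝ) := by exact_mod_cast hl
  have hm' : (1:ℝ) ≤ (m:ℝ) := by exact_mod_cast hm
  show Lfun (l:ℝ) + Lfun ((k:ℝ)+l+m) < Lfun ((l:ℝ)+m) + Lfun ((k:ℝ)+l)
  set a : ℝ := (l:ℝ)
  set d : ℝ := (k:ℝ) + l + m
  have ha : a ∈ Set.Ioi (1:ℝ) := by simp only [Set.mem_Ioi]; linarith
  have hd : d ∈ Set.Ioi (1:ℝ) := by simp only [Set.mem_Ioi, d]; linarith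
  have hne : a ≠ d := by simp only [a, d]; intro h; linarith
  have hkm : (0:ℝ) < (k:ℝ) + m := by linarith
  set θ : ℝ := (k:ℝ)/((k:ℝ)+(m:ℝ))
  have hθ0 : 0 < θ := by positivity
  have hθ1 : 0 < 1 - θ := by
    have : θ < 1 := by rw [div_lt_one hkm]; linarith
    linarith
  have hsum : θ + (1 - θ) = 1 := by ring
  have hsum' : (1 - θ) + θ = 1 := by ring
  have e1 : θ • a + (1 - θ) • d = (l:ℝ) + m := by
    simp only [smul_eq_mul, a, d, θ]
    field_simp
    ring
  have e2 : (1 - θ) • a + θ • d = (k:ℝ) + l := by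
    simp only [smul_eq_mul, a, d, θ]
    field_simp
    ring
  have h1 := strictConcave_Lfun.2 ha hd hne hθ0 hθ1 hsum
  have h2 := strictConcave_Lfun.2 ha hd hne hθ1 hθ0 hsum'
  rw [e1] at h1
  rw [e2] at h2
  have := add_lt_add h1 h2
  simp only [smul_eq_mul] at this
  nlinarith [this]
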